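/- For every real constant r with −1 ≤ r ≤ 1, the integral ∫_{−π}^{π} log(1 − r·cos w) dw equals 4π·log( (√(1+r) + √(1−r))/2 ). -/

import Mathlib

open Real MeasureTheory intervalIntegral Filter Set

noncomputable def Faux (r : ℝ) : ℝ := ∫ w in (-π)..π, Real.log (1 - r * Real.cos w)

noncomputable def Gaux (r : ℝ) : ℝ := 2 * π * Real.log ((1 + Real.sqrt (1 - r ^ 2)) / 2)

lemma hper (r : ℝ) : Function.Periodic (fun w => Real.log (1 - r * Real.cos w)) (2 * π) :=
  fun w => by simp [Real.cos_add_two_pi]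

lemma cont_aux {r : ℝ} (hr : |r| < 1) : Continuous fun w => Real.log (1 - r * Real.cos w) := by
  have h : ∀ w : ℝ, 1 - r * Real.cos w ≠ 0 := by
    intro w
    have h1 : |r * Real.cos w| < 1 := by
      rw [abs_mul]
      calc |r| * |Real.cos w| ≤ |r| * 1 :=
            mul_le_mul_of_nonneg_left (Real.abs_cos_le_one w) (abs_nonneg r)
        _ < 1 := by simpa using hr
    have := abs_lt.mp h1
    nlinarith [this.1, this.2]
  exact (continuous_const.sub (continuous_const.mul Real.continuous_cos)).log h

lemma Faux_neg (r : ℝ) : Faux (-r) = Faux r := by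
  have h1 : Faux (-r) = ∫ w in (-π)..π, (fun x => Real.log (1 - r * Real.cos x)) (w + π) := by
    unfold Faux
    congr 1
    ext w
    simp only [Real.cos_add_pi]
    ring_nf
  have h1' := integral_comp_add_right (a := -π) (b := π)
    (fun x => Real.log (1 - r * Real.cos x)) π
  rw [h1, h1']
  have h2 := (hper r).intervalIntegral_add_eq (-π + π) (-π)
  have e1 : -π + π + 2 * π = π + π := by ring
  have e2 : -π + 2 * π = π := by ring
  rw [e1, e2] at h2
  exact h2

lemma scale_aux {s : ℝ} (hs : |s| < 1) :
    (∫ w in (-π)..π, Real.log (1 - s * Real.cos (2 * w))) = Faux s := by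
  have hc := cont_aux hs
  have h2 : (∫ w in (-π)..π, Real.log (1 - s * Real.cos (2 * w)))
      = (2 : ℝ)⁻¹ • ∫ x in (2 * (-π))..(2 * π), Real.log (1 - s * Real.cos x) :=
    integral_comp_mul_left (fun x => Real.log (1 - s * Real.cos x)) two_ne_zero
  have i1 : IntervalIntegrable (fun x => Real.log (1 - s * Real.cos x)) volume (2 * (-π)) 0 :=
    hc.intervalIntegrable _ _
  have i2 : IntervalIntegrable (fun x => Real.log (1 - s * Real.cos x)) volume 0 (2 * π) :=
    hc.intervalIntegrable _ _
  have split := integral_add_adjacent_intervals i1 i2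
  have e1 : (∫ x in (2 * (-π))..(0 : ℝ), Real.log (1 - s * Real.cos x)) = Faux s := by
    have h3 := (hper s).intervalIntegral_add_eq (2 * (-π)) (-π)
    have e1 : 2 * (-π) + 2 * π = 0 := by ring
    have e2 : -π + 2 * π = π := by ring
    rw [e1, e2] at h3
    exact h3
  have e2 : (∫ x in (0 : ℝ)..(2 * π), Real.log (1 - s * Real.cos x)) = Faux s := by
    have h3 := (hper s).intervalIntegral_add_eq 0 (-π)
    have e1 : (0 : ℝ) + 2 * π = 2 * π := by ring
    have e2 : -π + 2 * π = π := by ring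
    rw [e1, e2] at h3
    exact h3
  rw [h2, ← split, e1, e2]
  simp
  ring

lemma s_mem {r : ℝ} (hr0 : 0 ≤ r) (hr1 : r < 1) :
    0 ≤ r ^ 2 / (2 - r ^ 2) ∧ r ^ 2 / (2 - r ^ 2) < 1 := by
  have h2 : (0:ℝ) < 2 - r ^ 2 := by nlinarith
  constructor
  · positivity
  · rw [div_lt_one h2]; nlinarith

lemma funcEqF {r : ℝ} (hr0 : 0 ≤ r) (hr1 : r < 1) :
    2 * Faux r = 2 * π * Real.log (1 - r ^ 2 / 2) + Faux (r ^ 2 / (2 - r ^ 2)) := by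
  set s := r ^ 2 / (2 - r ^ 2) with hs_def
  obtain ⟨hs0, hs1⟩ := s_mem hr0 hr1
  have habs : |r| < 1 := by rwa [abs_of_nonneg hr0]
  have hsabs : |s| < 1 := by rwa [abs_of_nonneg hs0]
  have h2 : (0:ℝ) < 2 - r ^ 2 := by nlinarith
  have hc1 := cont_aux habs
  have hcneg : Continuous fun w => Real.log (1 + r * Real.cos w) := by
    have h := cont_aux (r := -r) (by rwa [abs_neg])
    convert h using 2 with w
    ring_nf
  have key : ∀ w : ℝ, Real.log (1 - r * Real.cos w) + Real.log (1 + r * Real.cos w)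
      = Real.log (1 - r ^ 2 / 2) + Real.log (1 - s * Real.cos (2 * w)) := by
    intro w
    have hcw1 : |Real.cos w| ≤ 1 := Real.abs_cos_le_one w
    have hcw := abs_le.mp hcw1
    have ha : (0:ℝ) < 1 - r * Real.cos w := by nlinarith
    have hb : (0:ℝ) < 1 + r * Real.cos w := by nlinarith
    have hd : (0:ℝ) < 1 - s * Real.cos (2 * w) := by
      have h1 : |Real.cos (2*w)| ≤ 1 := Real.abs_cos_le_one _
      have := abs_le.mp h1
      nlinarith
    have hc : (0:ℝ) < 1 - r ^ 2 / 2 := by nlinarith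
    rw [← Real.log_mul (ne_of_gt ha) (ne_of_gt hb), ← Real.log_mul (ne_of_gt hc) (ne_of_gt hd)]
    congr 1
    rw [Real.cos_two_mul, hs_def]
    field_simp
    ring
  have i1 : IntervalIntegrable (fun w => Real.log (1 - r * Real.cos w)) volume (-π) π :=
    hc1.intervalIntegrable _ _
  have i2 : IntervalIntegrable (fun w => Real.log (1 + r * Real.cos w)) volume (-π) π :=
    hcneg.intervalIntegrable _ _
  have i3 : IntervalIntegrable (fun _ : ℝ => Real.log (1 - r ^ 2 / 2)) volume (-π) π :=
    intervalIntegrable_const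
  have i4 : IntervalIntegrable (fun w => Real.log (1 - s * Real.cos (2 * w))) volume (-π) π := by
    have := (cont_aux hsabs).comp (continuous_const.mul continuous_id : Continuous fun w : ℝ => 2 * w)
    exact this.intervalIntegrable _ _
  have hFneg : Faux (-r) = ∫ w in (-π)..π, Real.log (1 + r * Real.cos w) := by
    unfold Faux; congr 1; ext w; ring_nf
  calc 2 * Faux r = Faux r + Faux (-r) := by rw [Faux_neg]; ring
    _ = ∫ w in (-π)..π,
          (Real.log (1 - r * Real.cos w) + Real.log (1 + r * Real.cos w)) := by
        rw [hFneg]; exact (integral_add i1 i2).symm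
    _ = ∫ w in (-π)..π,
          (Real.log (1 - r ^ 2 / 2) + Real.log (1 - s * Real.cos (2 * w))) := by
        simp_rw [key]
    _ = (∫ _ in (-π)..π, Real.log (1 - r ^ 2 / 2))
          + ∫ w in (-π)..π, Real.log (1 - s * Real.cos (2 * w)) := integral_add i3 i4
    _ = 2 * π * Real.log (1 - r ^ 2 / 2) + Faux s := by
        rw [intervalIntegral.integral_const, scale_aux hsabs]
        simp only [smul_eq_mul]
        ring

lemma funcEqG {r : ℝ} (hr0 : 0 ≤ r) (hr1 : r < 1) :
    2 * Gaux r = 2 * π * Real.log (1 - r ^ 2 / 2) + Gaux (r ^ 2 / (2 - r ^ 2)) := by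
  set t := Real.sqrt (1 - r ^ 2) with ht_def
  have h2 : (0:ℝ) < 2 - r ^ 2 := by nlinarith
  have ht2 : t ^ 2 = 1 - r ^ 2 := Real.sq_sqrt (by nlinarith)
  have ht0 : 0 < t := Real.sqrt_pos.mpr (by nlinarith)
  have hsq : Real.sqrt (1 - (r ^ 2 / (2 - r ^ 2)) ^ 2) = 2 * t / (2 - r ^ 2) := by
    rw [show 1 - (r ^ 2 / (2 - r ^ 2)) ^ 2 = (2 * t / (2 - r ^ 2)) ^ 2 by
      field_simp
      nlinarith [ht2]]
    exact Real.sqrt_sq (by positivity)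
  unfold Gaux
  rw [hsq, ← ht_def]
  have h1 : (1:ℝ) - r ^ 2 / 2 ≠ 0 := ne_of_gt (by nlinarith)
  have h3 : ((1:ℝ) + 2 * t / (2 - r ^ 2)) / 2 ≠ 0 := by positivity
  have hkey : (1 - r ^ 2 / 2) * ((1 + 2 * t / (2 - r ^ 2)) / 2) = ((1 + t) / 2) ^ 2 := by
    field_simp
    nlinarith [ht2]
  have : 2 * π * Real.log (1 - r ^ 2 / 2)
        + 2 * π * Real.log ((1 + 2 * t / (2 - r ^ 2)) / 2)
      = 2 * π * Real.log (((1 + t) / 2) ^ 2) := by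
    rw [← hkey, Real.log_mul h1 h3]; ring
  rw [this, Real.log_pow]
  push_cast
  ring

noncomputable def Baux (w : ℝ) : ℝ := (Real.log 2 + 2 * Real.log π) + 2 * |Real.log (abs w)|

lemma one_sub_cos_ge {w : ℝ} (h : |w| ≤ π) : w ^ 2 / π ^ 2 ≤ (1 - Real.cos w) / 2 := by
  have hπ := Real.pi_pos
  have h1 : |w| / π ≤ Real.sin (|w| / 2) := by
    have h0 := Real.mul_le_sin (x := |w| / 2) (by positivity) (by linarith [abs_nonneg w, h])
    calc |w| / π = 2 / π * (|w| / 2) := by field_simp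
      _ ≤ Real.sin (|w| / 2) := h0
  have h3 : Real.sin (w / 2) ^ 2 = (1 - Real.cos w) / 2 := by
    have hnn : (0:ℝ) ≤ (1 - Real.cos w) / 2 := by nlinarith [Real.cos_le_one w]
    rw [← sq_abs, Real.abs_sin_half, Real.sq_sqrt hnn]
  have h2 : Real.sin (|w| / 2) ^ 2 = (1 - Real.cos w) / 2 := by
    rcases abs_cases w with ⟨hw, _⟩ | ⟨hw, _⟩
    · rw [hw]; exact h3
    · rw [hw, show -w / 2 = -(w / 2) by ring, Real.sin_neg, neg_sq]; exact h3
  have h4 : (|w| / π) ^ 2 ≤ Real.sin (|w| / 2) ^ 2 := pow_le_pow_left₀ (by positivity) h1 2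
  rw [h2] at h4
  have h5 : (|w| / π) ^ 2 = w ^ 2 / π ^ 2 := by rw [div_pow, sq_abs]
  rw [h5] at h4
  exact h4

set_option maxHeartbeats 1000000 in
lemma intLogAbs : IntervalIntegrable (fun w : ℝ => Real.log |w|) volume (-π) π := by
  have hπ := Real.pi_pos
  have h1 : IntegrableOn (fun x : ℝ => Real.log π - Real.log x) (Ioc 0 π) volume := by
    refine intervalIntegral.integrableOn_deriv_of_nonneg
      (g := fun x : ℝ => x * Real.log π + (x - x * Real.log x)) ?_ ?_ ?_
    · exact ((continuous_id.mul continuous_const).add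
        (continuous_id.sub Real.continuous_mul_log)).continuousOn
    · intro x hx
      have hx0 : x ≠ 0 := ne_of_gt hx.1
      have d1 : HasDerivAt (fun x : ℝ => x * Real.log π) (Real.log π) x := hasDerivAt_mul_const _
      have d2 : HasDerivAt (fun x : ℝ => x * Real.log x) (Real.log x + 1) x :=
        Real.hasDerivAt_mul_log hx0
      have d3 : HasDerivAt (fun x : ℝ => x * Real.log π + (x - x * Real.log x))
          (Real.log π + (1 - (Real.log x + 1))) x := d1.add ((hasDerivAt_id x).sub d2)
      convert d3 using 1
      ring
    · intro x hx
      have := Real.log_le_log hx.1 (le_of_lt hx.2)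
      linarith
  have h2 : IntegrableOn (fun x : ℝ => Real.log x) (Ioc 0 π) volume := by
    have hc : IntegrableOn (fun _ : ℝ => Real.log π) (Ioc 0 π) volume :=
      integrableOn_const measure_Ioc_lt_top.ne
    have h := hc.sub h1
    have he : ((fun _ : ℝ => Real.log π) - fun x => Real.log π - Real.log x)
        = fun x : ℝ => Real.log x := by
      ext x; simp
    rwa [he] at h
  have h3 : IntegrableOn (fun w : ℝ => Real.log |w|) (Ioc 0 π) volume :=
    h2.congr_fun (fun x hx => by rw [abs_of_pos hx.1]) measurableSet_Ioc
  have h4 : IntervalIntegrable (fun w : ℝ => Real.log |w|) volume 0 π :=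
    (intervalIntegrable_iff_integrableOn_Ioc_of_le (le_of_lt hπ)).mpr h3
  have h5 : IntervalIntegrable (fun w : ℝ => Real.log |w|) volume (-π) 0 := by
    have h6 := (IntervalIntegrable.iff_comp_neg (by simp)).mp h4
    have h7 : (fun x : ℝ => Real.log |(-x)|) = fun x : ℝ => Real.log |x| := by
      ext x; rw [abs_neg]
    rw [h7] at h6
    simpa using h6.symm
  exact h5.trans h4

lemma intBaux : IntervalIntegrable Baux volume (-π) π := by
  unfold Baux
  exact _root_.intervalIntegrable_const.add (intLogAbs.abs.const_mul 2)

lemma bound_aux {r w : ℝ} (hr0 : 0 ≤ r) (hr1 : r ≤ 1) (hw : |w| ≤ π) (hw0 : w ≠ 0) :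
    |Real.log (1 - r * Real.cos w)| ≤ Baux w := by
  have hπ := Real.pi_pos
  have hq := one_sub_cos_ge hw
  have hw2 : 0 < w ^ 2 := by positivity
  have hπ2 : 0 < π ^ 2 := by positivity
  have hqpos : 0 < w ^ 2 / π ^ 2 := by positivity
  have hc1 : Real.cos w < 1 := by nlinarith
  have hcw := abs_le.mp (Real.abs_cos_le_one w)
  have hlow : (1 - Real.cos w) / 2 ≤ 1 - r * Real.cos w := by nlinarith [hcw.1, hcw.2]
  have hup : 1 - r * Real.cos w ≤ 2 := by nlinarith [hcw.1]
  have hpos : 0 < (1 - Real.cos w) / 2 := by linarith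
  have hlogup : Real.log (1 - r * Real.cos w) ≤ Real.log 2 :=
    Real.log_le_log (by linarith) hup
  have hloglow : Real.log ((1 - Real.cos w) / 2) ≤ Real.log (1 - r * Real.cos w) :=
    Real.log_le_log hpos hlow
  have h7 : Real.log (w ^ 2 / π ^ 2) ≤ Real.log ((1 - Real.cos w) / 2) :=
    Real.log_le_log (by positivity) hq
  have h8 : Real.log (w ^ 2 / π ^ 2) = 2 * Real.log |w| - 2 * Real.log π := by
    rw [Real.log_div (by positivity) (by positivity), Real.log_pow, Real.log_pow,
      ← Real.log_abs w]
    push_cast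
    ring
  have hπ1 : 0 ≤ Real.log π := Real.log_nonneg (by linarith [Real.pi_gt_three])
  have hlog2 : 0 ≤ Real.log 2 := Real.log_nonneg (by norm_num)
  have hna : -|Real.log (abs w)| ≤ Real.log (abs w) := neg_abs_le _
  have hab : Real.log (abs w) ≤ |Real.log (abs w)| := le_abs_self _
  unfold Baux
  rw [abs_le]
  constructor
  · linarith
  · linarith [abs_nonneg (Real.log (abs w))]

lemma ae_ne_zero : ∀ᵐ w : ℝ, w ≠ 0 := by
  rw [ae_iff]
  have h : {a : ℝ | ¬ a ≠ 0} = {0} := by ext x; simp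
  rw [h]
  exact Real.volume_singleton

lemma intFaux {r : ℝ} (hr0 : 0 ≤ r) (hr1 : r ≤ 1) :
    IntervalIntegrable (fun w => Real.log (1 - r * Real.cos w)) volume (-π) π := by
  have hπ := Real.pi_pos
  rw [intervalIntegrable_iff_integrableOn_Ioc_of_le (by linarith)]
  have hB : IntegrableOn Baux (Ioc (-π) π) volume :=
    (intervalIntegrable_iff_integrableOn_Ioc_of_le (by linarith)).mp intBaux
  apply Integrable.mono' hB
  · exact (Real.measurable_log.comp
      (measurable_const.sub (measurable_const.mul Real.measurable_cos))).aestronglyMeasurable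
  · filter_upwards [ae_restrict_mem measurableSet_Ioc, ae_restrict_of_ae ae_ne_zero]
      with w hmem hw0
    rw [Real.norm_eq_abs]
    exact bound_aux hr0 hr1 (abs_le.mpr ⟨by linarith [hmem.1], hmem.2⟩) hw0

lemma Fbound {r : ℝ} (hr0 : 0 ≤ r) (hr1 : r ≤ 1) :
    |Faux r| ≤ ∫ w in (-π)..π, Baux w := by
  have hπ := Real.pi_pos
  have hab : -π ≤ π := by linarith
  have hi := intFaux hr0 hr1
  calc |Faux r| ≤ ∫ w in (-π)..π, |Real.log (1 - r * Real.cos w)| :=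
        intervalIntegral.abs_integral_le_integral_abs hab
    _ ≤ ∫ w in (-π)..π, Baux w := by
        apply intervalIntegral.integral_mono_ae_restrict hab hi.abs intBaux
        filter_upwards [ae_restrict_mem measurableSet_Icc, ae_restrict_of_ae ae_ne_zero]
          with w hmem hw0
        exact bound_aux hr0 hr1 (abs_le.mpr ⟨hmem.1, hmem.2⟩) hw0

lemma Gbound {r : ℝ} (hr0 : 0 ≤ r) (hr1 : r ≤ 1) : |Gaux r| ≤ 2 * π * Real.log 2 := by
  have hπ := Real.pi_pos
  have ht0 : 0 ≤ Real.sqrt (1 - r ^ 2) := Real.sqrt_nonneg _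
  have ht1 : Real.sqrt (1 - r ^ 2) ≤ 1 := by
    have h := Real.sqrt_le_sqrt (show 1 - r ^ 2 ≤ 1 by nlinarith)
    simpa using h
  have hx0 : (0:ℝ) < (1 + Real.sqrt (1 - r ^ 2)) / 2 := by linarith
  have hup : Real.log ((1 + Real.sqrt (1 - r ^ 2)) / 2) ≤ 0 := by
    apply Real.log_nonpos (by linarith) (by linarith)
  have hlo : Real.log (1 / 2 : ℝ) ≤ Real.log ((1 + Real.sqrt (1 - r ^ 2)) / 2) :=
    Real.log_le_log (by norm_num) (by linarith)
  have h12 : Real.log (1 / 2 : ℝ) = -Real.log 2 := by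
    rw [Real.log_div one_ne_zero two_ne_zero, Real.log_one]; ring
  rw [h12] at hlo
  unfold Gaux
  rw [abs_mul]
  have h1 : |2 * π| = 2 * π := abs_of_pos (by linarith)
  rw [h1]
  have h2 : |Real.log ((1 + Real.sqrt (1 - r ^ 2)) / 2)| ≤ Real.log 2 := abs_le.mpr ⟨hlo, le_trans hup (Real.log_nonneg one_le_two)⟩
  nlinarith [h2, abs_nonneg (Real.log ((1 + Real.sqrt (1 - r ^ 2)) / 2))]

lemma main_lt {r : ℝ} (hr0 : 0 ≤ r) (hr1 : r < 1) : Faux r = Gaux r := by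
  set C : ℝ := (∫ w in (-π)..π, Baux w) + 2 * π * Real.log 2 with hC
  have claim : ∀ n : ℕ, ∀ r : ℝ, 0 ≤ r → r < 1 → |Faux r - Gaux r| ≤ C / 2 ^ n := by
    intro n
    induction n with
    | zero =>
      intro r hr0 hr1
      simp only [pow_zero, div_one, hC]
      calc |Faux r - Gaux r| ≤ |Faux r| + |Gaux r| := abs_sub _ _
        _ ≤ (∫ w in (-π)..π, Baux w) + 2 * π * Real.log 2 :=
          add_le_add (Fbound hr0 (le_of_lt hr1)) (Gbound hr0 (le_of_lt hr1))
    | succ n ih =>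
      intro r hr0 hr1
      obtain ⟨hs0, hs1⟩ := s_mem hr0 hr1
      have hF := funcEqF hr0 hr1
      have hG := funcEqG hr0 hr1
      have hkey : Faux r - Gaux r = (Faux (r ^ 2 / (2 - r ^ 2)) - Gaux (r ^ 2 / (2 - r ^ 2))) / 2 := by
        linarith
      rw [hkey]
      have := ih _ hs0 hs1
      rw [abs_div]
      have h2 : |(2:ℝ)| = 2 := by norm_num
      rw [h2]
      rw [pow_succ]
      calc |Faux (r ^ 2 / (2 - r ^ 2)) - Gaux (r ^ 2 / (2 - r ^ 2))| / 2 ≤ (C / 2 ^ n) / 2 := by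
            linarith
        _ = C / (2 ^ n * 2) := by ring
  have hlim : Tendsto (fun n : ℕ => C / 2 ^ n) atTop (nhds 0) := by
    have h := (tendsto_pow_atTop_nhds_zero_of_lt_one
      (by norm_num : (0:ℝ) ≤ 1/2) (by norm_num : (1/2:ℝ) < 1)).const_mul C
    simp only [mul_zero] at h
    convert h using 2 with n
    rw [div_pow, one_pow, div_eq_mul_inv, div_eq_mul_inv, one_mul]
  have habs : |Faux r - Gaux r| ≤ 0 := ge_of_tendsto' hlim (fun n => claim n r hr0 hr1)
  have h0 : Faux r - Gaux r = 0 := abs_eq_zero.mp (le_antisymm habs (abs_nonneg _))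
  linarith

lemma Gcont : ContinuousAt Gaux 1 := by
  have hinner : Continuous fun r : ℝ => (1 + Real.sqrt (1 - r ^ 2)) / 2 :=
    (continuous_const.add (Real.continuous_sqrt.comp
      (continuous_const.sub (continuous_pow 2)))).div_const 2
  have hne : (1 + Real.sqrt (1 - (1:ℝ) ^ 2)) / 2 ≠ 0 := by
    norm_num
  exact continuousAt_const.mul (hinner.continuousAt.log hne)

lemma main_one : Faux 1 = Gaux 1 := by
  have hπ := Real.pi_pos
  set u : ℕ → ℝ := fun n => 1 - 1 / (n + 1) with hu_def
  have hpos : ∀ n : ℕ, (0:ℝ) < (n:ℝ) + 1 := by intro n; positivity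
  have hu0 : ∀ n, 0 ≤ u n := by
    intro n
    simp only [hu_def, sub_nonneg]
    rw [div_le_one (hpos n)]
    linarith [Nat.cast_nonneg (α := ℝ) n]
  have hu1 : ∀ n, u n < 1 := by
    intro n
    simp only [hu_def]
    have : (0:ℝ) < 1 / ((n:ℝ) + 1) := by positivity
    linarith
  have huabs : ∀ n, |u n| < 1 := by
    intro n; rw [abs_of_nonneg (hu0 n)]; exact hu1 n
  have hut : Tendsto u atTop (nhds 1) := by
    have h1 := tendsto_one_div_add_atTop_nhds_zero_nat (𝕜 := ℝ)
    have h2 := (tendsto_const_nhds (α := ℕ) (x := (1:ℝ))).sub h1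
    simpa [hu_def, one_div] using h2
  have hF : Tendsto (fun n => Faux (u n)) atTop (nhds (Faux 1)) := by
    unfold Faux
    apply intervalIntegral.tendsto_integral_filter_of_dominated_convergence Baux
    · exact Eventually.of_forall fun n => (cont_aux (huabs n)).aestronglyMeasurable
    · apply Eventually.of_forall
      intro n
      filter_upwards [ae_ne_zero] with w hw0 hmem
      rw [Set.uIoc_of_le (by linarith : -π ≤ π)] at hmem
      rw [Real.norm_eq_abs]
      exact bound_aux (hu0 n) (le_of_lt (hu1 n)) (abs_le.mpr ⟨by linarith [hmem.1], hmem.2⟩) hw0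
    · exact intBaux
    · filter_upwards [ae_ne_zero] with w hw0 hmem
      rw [Set.uIoc_of_le (by linarith : -π ≤ π)] at hmem
      have hwle : |w| ≤ π := abs_le.mpr ⟨by linarith [hmem.1], hmem.2⟩
      have hq := one_sub_cos_ge hwle
      have hw2 : 0 < w ^ 2 / π ^ 2 := by positivity
      have hcos : Real.cos w < 1 := by nlinarith
      have hne : 1 - 1 * Real.cos w ≠ 0 := by nlinarith
      have hcont : ContinuousAt (fun t : ℝ => Real.log (1 - t * Real.cos w)) 1 := by
        apply ContinuousAt.comp (Real.continuousAt_log (by simpa using hne))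
        exact (continuous_const.sub (continuous_id.mul continuous_const)).continuousAt
      have := hcont.tendsto.comp hut
      simpa [Function.comp_def] using this
  have hG : Tendsto (fun n => Faux (u n)) atTop (nhds (Gaux 1)) := by
    have h1 : (fun n => Faux (u n)) = fun n => Gaux (u n) :=
      funext fun n => main_lt (hu0 n) (hu1 n)
    rw [h1]
    exact Gcont.tendsto.comp hut
  exact tendsto_nhds_unique hF hG

lemma RHS_eq {r : ℝ} (hr : -1 ≤ r) (hr' : r ≤ 1) :
    4 * π * Real.log ((Real.sqrt (1 + r) + Real.sqrt (1 - r)) / 2) = Gaux r := by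
  have h1 : ((Real.sqrt (1 + r) + Real.sqrt (1 - r)) / 2) ^ 2
      = (1 + Real.sqrt (1 - r ^ 2)) / 2 := by
    have ha : Real.sqrt (1 + r) ^ 2 = 1 + r := Real.sq_sqrt (by linarith)
    have hb : Real.sqrt (1 - r) ^ 2 = 1 - r := Real.sq_sqrt (by linarith)
    have hab : Real.sqrt (1 + r) * Real.sqrt (1 - r) = Real.sqrt (1 - r ^ 2) := by
      rw [← Real.sqrt_mul (by linarith)]
      congr 1; ring
    field_simp
    nlinarith [ha, hb, hab]
  unfold Gaux
  rw [← h1, Real.log_pow]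
  push_cast
  ring

theorem statement12 (r : ℝ) (hr : -1 ≤ r) (hr' : r ≤ 1) :
    ∫ w in (-π)..π, Real.log (1 - r * Real.cos w)
      = 4 * π * Real.log ((Real.sqrt (1 + r) + Real.sqrt (1 - r)) / 2) := by
  have main : ∀ x : ℝ, 0 ≤ x → x ≤ 1 → Faux x = Gaux x := by
    intro x hx0 hx1
    rcases lt_or_eq_of_le hx1 with h | h
    · exact main_lt hx0 h
    · rw [h]; exact main_one
  have hFG : Faux r = Gaux r := by
    rcases le_total 0 r with h | h
    · exact main r h hr'
    · have h1 : Faux r = Faux (-r) := by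
        have := Faux_neg (-r)
        rw [neg_neg] at this
        exact this
      have h2 : Faux (-r) = Gaux (-r) := main (-r) (by linarith) (by linarith)
      have h3 : Gaux (-r) = Gaux r := by unfold Gaux; rw [neg_sq]
      rw [h1, h2, h3]
  rw [RHS_eq hr hr']
  exact hFG
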